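/- arXiv:math/9902129 — 2 statements merged into one kernel-verified Lean document; each statement's English description precedes it below -/
import Mathlib

section
/- Let (M,ω) be a 2n-dimensional symplectic manifold with Poisson bracket {·,·} and let θ₁,…,θ_{2k} satisfy dθ₁ ∧ ⋯ ∧ dθ_{2k} ≠ 0 and invertibility of ({θᵢ,θⱼ}). Then the Dirac bracket {f,g}_D = {f,g} − {f,θᵢ}c_{ij}{θⱼ,g} is characterized (up to the factor n−k) by the form identity: (n−k) df ∧ dg ∧ dθ₁ ∧ ⋯ ∧ dθ_{2k} ∧ ω^{n−k−1} = {f,g}_D · dθ₁ ∧ ⋯ ∧ dθ_{2k} ∧ ω^{n−k}. -/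
set_option synthInstance.maxHeartbeats 1000000
set_option maxHeartbeats 1000000

noncomputable section
open ExteriorAlgebra

/-!
STATEMENT 10: characterization of the Dirac bracket by the form identity
  (n−k) df ∧ dg ∧ dθ₁ ∧ ⋯ ∧ dθ_{2k} ∧ ω^{n−k−1}
      = {f,g}_D · dθ₁ ∧ ⋯ ∧ dθ_{2k} ∧ ω^{n−k}.

As sanctioned by the context, this is formalized pointwise on the (standard, by
Darboux) symplectic vector space ℝ^{2n}, modeled as V = (Fin n → ℝ) × (Fin n → ℝ)
(p-coordinates first), with ω = Σⱼ dpⱼ ∧ dqⱼ.  Covectors φ, γ, ϑᵢ are the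
differentials of f, g, θᵢ at the given point; `sharp φ` is the Hamiltonian vector
of φ (characterized by ι_{sharp φ} ω = −φ), and the Poisson bracket of two
covectors is {φ,ψ} = ψ(sharp φ); the Dirac bracket is
{φ,γ}_D = {φ,γ} − Σ_{i,j} {φ,ϑᵢ} c_{ij} {ϑⱼ,γ} with c the inverse of
C = ({ϑᵢ,ϑⱼ}).
-/

variable (n : ℕ)

abbrev V (n : ℕ) := (Fin n → ℝ) × (Fin n → ℝ)

def dp (j : Fin n) : Module.Dual ℝ (V n) :=
  (LinearMap.proj j).comp (LinearMap.fst ℝ (Fin n → ℝ) (Fin n → ℝ))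

def dq (j : Fin n) : Module.Dual ℝ (V n) :=
  (LinearMap.proj j).comp (LinearMap.snd ℝ (Fin n → ℝ) (Fin n → ℝ))

/-- the standard symplectic form ω = Σⱼ dpⱼ ∧ dqⱼ, as a constant 2-form -/
def omega : ExteriorAlgebra ℝ (Module.Dual ℝ (V n)) :=
  ∑ j, ExteriorAlgebra.ι ℝ (dp n j) * ExteriorAlgebra.ι ℝ (dq n j)

/-- Hamiltonian vector of a covector φ : the unique X with ι_X ω = −φ -/
def sharp (φ : Module.Dual ℝ (V n)) : V n :=
  (fun j => -φ (0, Pi.single j 1), fun j => φ (Pi.single j 1, 0))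

/-- pointwise Poisson bracket of two covectors: {φ,ψ} = ψ(X_φ) -/
def pb (φ ψ : Module.Dual ℝ (V n)) : ℝ := ψ (sharp n φ)

/-! ### Auxiliary lemmas: generic exterior algebra facts -/

section general
variable {M : Type*} [AddCommGroup M] [Module ℝ M]

lemma ι_swap (a w : M) : ι ℝ a * ι ℝ w = -(ι ℝ w * ι ℝ a) := by
  have := ExteriorAlgebra.ι_add_mul_swap (R := ℝ) a w
  linear_combination (norm := noncomm_ring) this

lemma prod_mul_ι (l : List M) (w : M) :
    (l.map (ι ℝ)).prod * ι ℝ w = (-1 : ℝ) ^ l.length • (ι ℝ w * (l.map (ι ℝ)).prod) := by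
  induction l with
  | nil => simp
  | cons a t ih =>
      simp only [List.map_cons, List.prod_cons, List.length_cons, mul_assoc, ih,
        mul_smul_comm, pow_succ]
      rw [← mul_assoc, ι_swap]
      simp [smul_smul, mul_comm, neg_mul, mul_assoc]

lemma contract_prod_mul (d : Module.Dual ℝ M) (l : List M) (y : ExteriorAlgebra ℝ M) :
    CliffordAlgebra.contractLeft d ((l.map (ι ℝ)).prod * y)
      = CliffordAlgebra.contractLeft d (l.map (ι ℝ)).prod * y
        + (-1 : ℝ) ^ l.length • ((l.map (ι ℝ)).prod * CliffordAlgebra.contractLeft d y) := by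
  induction l with
  | nil => simp [CliffordAlgebra.contractLeft_one]
  | cons a t ih =>
      simp only [List.map_cons, List.prod_cons, List.length_cons, mul_assoc,
        CliffordAlgebra.contractLeft_ι_mul, ih, pow_succ]
      simp only [mul_add, mul_smul_comm, smul_sub, sub_mul, smul_mul_assoc]
      simp only [mul_assoc]
      module

lemma contract_prod_eq_zero (d : Module.Dual ℝ M) (l : List M) (h : ∀ w ∈ l, d w = 0) :
    CliffordAlgebra.contractLeft d (l.map (ι ℝ)).prod = 0 := by
  induction l with
  | nil => simp [CliffordAlgebra.contractLeft_one]
  | cons a t ih =>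
      simp only [List.map_cons, List.prod_cons, CliffordAlgebra.contractLeft_ι_mul]
      rw [h a (by simp), ih fun w hw => h w (by simp [hw])]
      simp

lemma contract_two (d : Module.Dual ℝ M) (a b : M) :
    CliffordAlgebra.contractLeft d (ι ℝ a * ι ℝ b) = d a • ι ℝ b - d b • ι ℝ a := by
  rw [CliffordAlgebra.contractLeft_ι_mul, CliffordAlgebra.contractLeft_ι]
  congr 1
  rw [← Algebra.commutes, ← Algebra.smul_def]

lemma contract_two_mul (d : Module.Dual ℝ M) (a b : M) (y : ExteriorAlgebra ℝ M) :
    CliffordAlgebra.contractLeft d (ι ℝ a * ι ℝ b * y)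
      = (d a • ι ℝ b - d b • ι ℝ a) * y + ι ℝ a * ι ℝ b * CliffordAlgebra.contractLeft d y := by
  rw [mul_assoc, CliffordAlgebra.contractLeft_ι_mul, CliffordAlgebra.contractLeft_ι_mul]
  simp only [mul_sub, mul_smul_comm, sub_mul, smul_mul_assoc, mul_assoc]
  module

lemma ι_comm_ι_ι (w a b : M) : ι ℝ w * (ι ℝ a * ι ℝ b) = ι ℝ a * ι ℝ b * ι ℝ w := by
  rw [← mul_assoc, ι_swap w a, neg_mul, mul_assoc, ι_swap w b, mul_neg, neg_neg, mul_assoc]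

lemma exteriorPower_eq_bot (N : ℕ) [FiniteDimensional ℝ M] (h : Module.finrank ℝ M < N) :
    (LinearMap.range (ι ℝ (M := M))) ^ N = ⊥ := by
  show (⋀[ℝ]^N M : Submodule ℝ (ExteriorAlgebra ℝ M)) = ⊥
  rw [← ExteriorAlgebra.ιMulti_span_fixedDegree]
  refine Submodule.span_eq_bot.2 ?_
  rintro _ ⟨v, rfl⟩
  refine AlternatingMap.map_linearDependent _ v fun hli => ?_
  have := hli.fintype_card_le_finrank
  simp only [Fintype.card_fin] at this
  omega

end general

/-! ### Auxiliary lemmas about the standard symplectic structure on `V n` -/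

/-- `sharp` as a linear map -/
def sharpL : Module.Dual ℝ (V n) →ₗ[ℝ] V n where
  toFun := sharp n
  map_add' φ ψ := by
    refine Prod.ext (funext fun j => ?_) (funext fun j => ?_) <;>
      simp [sharp, neg_add, add_comm]
  map_smul' r φ := by
    refine Prod.ext (funext fun j => ?_) (funext fun j => ?_) <;>
      simp [sharp, mul_neg]

lemma sharp_eq (φ : Module.Dual ℝ (V n)) : sharp n φ = sharpL n φ := rfl

lemma dp_apply (j : Fin n) (x : V n) : dp n j x = x.1 j := rfl
lemma dq_apply (j : Fin n) (x : V n) : dq n j x = x.2 j := rfl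

/-- expansion of a covector in the dp/dq basis -/
lemma dual_expand (ψ : Module.Dual ℝ (V n)) :
    ∑ j, (ψ (Pi.single j 1, 0) • dp n j + ψ (0, Pi.single j 1) • dq n j) = ψ := by
  apply LinearMap.ext
  intro x
  have hx : x = (∑ j, x.1 j • ((Pi.single j 1 : Fin n → ℝ), (0 : Fin n → ℝ)))
      + (∑ j, x.2 j • ((0 : Fin n → ℝ), (Pi.single j 1 : Fin n → ℝ))) := by
    ext i <;>
      simp [Prod.fst_sum, Prod.snd_sum, Finset.sum_apply, Pi.single_apply, mul_comm]
  rw [LinearMap.sum_apply]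
  simp only [LinearMap.add_apply, LinearMap.smul_apply, dp_apply, dq_apply, smul_eq_mul]
  conv_rhs => rw [hx, map_add, map_sum, map_sum]
  simp only [LinearMap.map_smul, smul_eq_mul]
  rw [← Finset.sum_add_distrib]
  exact Finset.sum_congr rfl fun j _ => by ring

/-- the covector ν with ι_X ω = ι ν for X = sharp μ is −μ -/
lemma sharp_flat (μ : Module.Dual ℝ (V n)) :
    (∑ j, (((sharp n μ).1 j) • dq n j - ((sharp n μ).2 j) • dp n j)) = -μ := by
  have h := dual_expand n μ
  calc (∑ j, (((sharp n μ).1 j) • dq n j - ((sharp n μ).2 j) • dp n j))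
      = ∑ j, -(μ (Pi.single j 1, 0) • dp n j + μ (0, Pi.single j 1) • dq n j) := by
        refine Finset.sum_congr rfl fun j _ => ?_
        simp only [sharp, neg_smul]
        module
    _ = -μ := by rw [Finset.sum_neg_distrib, h]

lemma contract_omega (d : Module.Dual ℝ (Module.Dual ℝ (V n))) :
    CliffordAlgebra.contractLeft d (omega n)
      = ι ℝ (∑ j, (d (dp n j) • dq n j - d (dq n j) • dp n j)) := by
  rw [omega, map_sum, map_sum]
  exact Finset.sum_congr rfl fun j _ => by rw [contract_two, map_sub, map_smul, map_smul]

lemma ι_comm_omega (w : Module.Dual ℝ (V n)) : ι ℝ w * omega n = omega n * ι ℝ w := by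
  rw [omega, Finset.mul_sum, Finset.sum_mul]
  exact Finset.sum_congr rfl fun j _ => ι_comm_ι_ι w _ _

lemma contract_omega_mul (d : Module.Dual ℝ (Module.Dual ℝ (V n)))
    (y : ExteriorAlgebra ℝ (Module.Dual ℝ (V n))) :
    CliffordAlgebra.contractLeft d (omega n * y)
      = CliffordAlgebra.contractLeft d (omega n) * y
        + omega n * CliffordAlgebra.contractLeft d y := by
  rw [omega, map_sum]
  simp only [Finset.sum_mul, map_sum]
  simp only [contract_two_mul, contract_two]
  rw [Finset.sum_add_distrib]

lemma contract_omega_pow (d : Module.Dual ℝ (Module.Dual ℝ (V n))) (m : ℕ) :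
    CliffordAlgebra.contractLeft d (omega n ^ (m + 1))
      = ((m : ℝ) + 1) • (CliffordAlgebra.contractLeft d (omega n) * omega n ^ m) := by
  induction m with
  | zero => simp
  | succ m ih =>
      rw [pow_succ', contract_omega_mul, ih, mul_smul_comm]
      have hc : omega n * (CliffordAlgebra.contractLeft d (omega n) * omega n ^ m)
          = CliffordAlgebra.contractLeft d (omega n) * omega n ^ (m + 1) := by
        rw [← mul_assoc, contract_omega, ← ι_comm_omega, mul_assoc, ← pow_succ']
      rw [hc]
      push_cast
      module
theorem dirac_bracket_form_identity (k : ℕ) (hkn : k < n)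
    (φ γ : Module.Dual ℝ (V n)) (ϑ : Fin (2 * k) → Module.Dual ℝ (V n))
    (hθ : (List.ofFn fun i => ExteriorAlgebra.ι ℝ (ϑ i)).prod ≠ 0)
    (c : Matrix (Fin (2 * k)) (Fin (2 * k)) ℝ)
    (hCc : (Matrix.of fun i j => pb n (ϑ i) (ϑ j)) * c = 1)
    (hcC : c * (Matrix.of fun i j => pb n (ϑ i) (ϑ j)) = 1) :
    -- the 2k-form dθ₁ ∧ ⋯ ∧ dθ_{2k} :
    let θprod : ExteriorAlgebra ℝ (Module.Dual ℝ (V n)) :=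
      (List.ofFn fun i => ExteriorAlgebra.ι ℝ (ϑ i)).prod
    -- the Dirac bracket {f,g}_D at the point:
    let D : ℝ := pb n φ γ - ∑ i, ∑ j, pb n φ (ϑ i) * c i j * pb n (ϑ j) γ
    ((n - k : ℕ) : ℝ) •
        (ExteriorAlgebra.ι ℝ φ * ExteriorAlgebra.ι ℝ γ * θprod * omega n ^ (n - k - 1)) =
      D • (θprod * omega n ^ (n - k)) := by
  intro θprod D
  have hDdef : D = pb n φ γ - ∑ i, ∑ j, pb n φ (ϑ i) * c i j * pb n (ϑ j) γ := rfl
  set r : Fin (2 * k) → ℝ := fun j => ∑ i, pb n φ (ϑ i) * c i j with hr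
  set μ : Module.Dual ℝ (V n) := φ - ∑ j, r j • ϑ j with hμ
  set d : Module.Dual ℝ (Module.Dual ℝ (V n)) :=
    Module.Dual.eval ℝ (V n) (sharp n μ) with hd
  have hdψ : ∀ ψ : Module.Dual ℝ (V n), d ψ = ψ (sharp n μ) := fun ψ => by rw [hd]; rfl
  -- the inverse identity, entrywise
  have hcC' : ∀ i l, (∑ j, c i j * pb n (ϑ j) (ϑ l)) = if i = l then 1 else 0 := by
    intro i l
    have h := (Matrix.ext_iff.2 hcC) i l
    rw [Matrix.mul_apply] at h
    simpa [Matrix.one_apply] using h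
  -- linearity of the bracket in its first slot
  have key : ∀ ψ : Module.Dual ℝ (V n),
      ψ (sharp n μ) = pb n φ ψ - ∑ j, r j * pb n (ϑ j) ψ := by
    intro ψ
    simp only [hμ, sharp_eq, map_sub, map_sum, map_smul, smul_eq_mul]
    rfl
  -- the Dirac-Hamiltonian vector is tangent to the constraints
  have hϑX : ∀ l, ϑ l (sharp n μ) = 0 := by
    intro l
    rw [key (ϑ l)]
    have hsum : ∑ j, r j * pb n (ϑ j) (ϑ l) = pb n φ (ϑ l) := by
      have h1 : ∀ j, r j * pb n (ϑ j) (ϑ l)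
          = ∑ i, pb n φ (ϑ i) * (c i j * pb n (ϑ j) (ϑ l)) := by
        intro j
        simp only [hr]
        rw [Finset.sum_mul]
        exact Finset.sum_congr rfl fun i _ => by ring
      rw [Finset.sum_congr rfl fun j _ => h1 j, Finset.sum_comm]
      calc ∑ i, ∑ j, pb n φ (ϑ i) * (c i j * pb n (ϑ j) (ϑ l))
          = ∑ i, pb n φ (ϑ i) * ∑ j, c i j * pb n (ϑ j) (ϑ l) :=
            Finset.sum_congr rfl fun i _ => (Finset.mul_sum _ _ _).symm
        _ = pb n φ (ϑ l) := by
            rw [Finset.sum_congr rfl fun i _ => by rw [hcC' i l]]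
            simp [mul_ite]
    rw [hsum, sub_self]
  -- value of γ on the Dirac-Hamiltonian vector is the Dirac bracket
  have hγX : γ (sharp n μ) = D := by
    rw [key γ, hDdef]
    congr 1
    calc ∑ j, r j * pb n (ϑ j) γ
        = ∑ j, ∑ i, pb n φ (ϑ i) * c i j * pb n (ϑ j) γ := by
          refine Finset.sum_congr rfl fun j _ => ?_
          simp only [hr]
          rw [Finset.sum_mul]
      _ = ∑ i, ∑ j, pb n φ (ϑ i) * c i j * pb n (ϑ j) γ := Finset.sum_comm
  -- basic facts about θprod
  have hθprod : θprod = ((List.ofFn ϑ).map (ExteriorAlgebra.ι ℝ)).prod := by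
    rw [List.map_ofFn]; rfl
  have hΘ0 : CliffordAlgebra.contractLeft d θprod = 0 := by
    rw [hθprod]
    refine contract_prod_eq_zero d _ fun w hw => ?_
    obtain ⟨i, rfl⟩ := List.mem_ofFn.1 hw
    rw [hdψ]
    exact hϑX i
  have hΘ0' : CliffordAlgebra.contractLeft d ((List.ofFn ϑ).map (ExteriorAlgebra.ι ℝ)).prod = 0 := by
    rw [← hθprod]; exact hΘ0
  have homega : CliffordAlgebra.contractLeft d (omega n) = ExteriorAlgebra.ι ℝ (-μ) := by
    rw [contract_omega]
    refine congrArg _ ?_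
    calc ∑ j, (d (dp n j) • dq n j - d (dq n j) • dp n j)
        = ∑ j, (((sharp n μ).1 j) • dq n j - ((sharp n μ).2 j) • dp n j) :=
          Finset.sum_congr rfl fun j _ => by rw [hdψ, hdψ]; rfl
      _ = -μ := sharp_flat n μ
  have hμι : θprod * ExteriorAlgebra.ι ℝ μ = θprod * ExteriorAlgebra.ι ℝ φ := by
    rw [hμ, map_sub, mul_sub]
    have hz : θprod * ExteriorAlgebra.ι ℝ (∑ j, r j • ϑ j) = 0 := by
      rw [map_sum, Finset.mul_sum]
      refine Finset.sum_eq_zero fun j _ => ?_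
      rw [map_smul, mul_smul_comm]
      have h0 : θprod * ExteriorAlgebra.ι ℝ (ϑ j) = 0 := by
        rw [hθprod, prod_mul_ι, List.length_ofFn]
        have hz0 := ExteriorAlgebra.ι_mul_prod_list (R := ℝ) ϑ j
        rw [List.map_ofFn]
        rw [show (⇑(ExteriorAlgebra.ι ℝ) ∘ ϑ) = fun i => ExteriorAlgebra.ι ℝ (ϑ i) from rfl]
        rw [hz0, smul_zero]
      rw [h0, smul_zero]
    rw [hz, sub_zero]
  have hswap : θprod * ExteriorAlgebra.ι ℝ φ = ExteriorAlgebra.ι ℝ φ * θprod := by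
    rw [hθprod, prod_mul_ι, List.length_ofFn, pow_mul, neg_one_sq, one_pow, one_smul]
  -- the exponent
  obtain ⟨m', hm'⟩ : ∃ m', n - k = m' + 1 := ⟨n - k - 1, by omega⟩
  -- top-degree vanishing
  have hE0 : ExteriorAlgebra.ι ℝ γ * (θprod * omega n ^ (m' + 1)) = 0 := by
    have hfr : Module.finrank ℝ (Module.Dual ℝ (V n)) = 2 * n := by
      rw [Subspace.dual_finrank_eq]
      rw [Module.finrank_prod, Module.finrank_pi]
      simp only [Fintype.card_fin]
      omega
    have h1 : ExteriorAlgebra.ι ℝ γ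
        ∈ (LinearMap.range (ExteriorAlgebra.ι ℝ (M := Module.Dual ℝ (V n)))) ^ 1 := by
      rw [pow_one]; exact LinearMap.mem_range_self _ _
    have h2 : θprod ∈ (LinearMap.range (ExteriorAlgebra.ι ℝ (M := Module.Dual ℝ (V n)))) ^ (2 * k) := by
      have hm := ExteriorAlgebra.ιMulti_range ℝ (2 * k) (Set.mem_range_self ϑ)
      rwa [ExteriorAlgebra.ιMulti_apply] at hm
    have hω2 : omega n ∈ (LinearMap.range (ExteriorAlgebra.ι ℝ (M := Module.Dual ℝ (V n)))) ^ 2 := by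
      rw [sq, omega]
      exact Submodule.sum_mem _ fun j _ =>
        Submodule.mul_mem_mul (LinearMap.mem_range_self _ _) (LinearMap.mem_range_self _ _)
    have h3 : omega n ^ (m' + 1)
        ∈ (LinearMap.range (ExteriorAlgebra.ι ℝ (M := Module.Dual ℝ (V n)))) ^ (2 * (m' + 1)) := by
      rw [pow_mul]
      exact Submodule.pow_mem_pow _ hω2 _
    have hmem := Submodule.mul_mem_mul h1 (Submodule.mul_mem_mul h2 h3)
    rw [← pow_add, ← pow_add] at hmem
    have hb := exteriorPower_eq_bot (M := Module.Dual ℝ (V n)) (1 + (2 * k + 2 * (m' + 1)))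
      (by rw [hfr]; omega)
    rw [hb] at hmem
    simpa using hmem
  -- the contraction of θprod * ω^(m'+1)
  have hTω : CliffordAlgebra.contractLeft d (θprod * omega n ^ (m' + 1))
      = θprod * (((m' : ℝ) + 1) • (ExteriorAlgebra.ι ℝ (-μ) * omega n ^ m')) := by
    rw [hθprod, contract_prod_mul, hΘ0', zero_mul, zero_add, List.length_ofFn,
      contract_omega_pow, homega, pow_mul, neg_one_sq, one_pow, one_smul]
  -- the rearrangement of the second term
  have e1 : θprod * (ExteriorAlgebra.ι ℝ (-μ) * omega n ^ m')
      = -(ExteriorAlgebra.ι ℝ φ * (θprod * omega n ^ m')) := by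
    rw [map_neg, neg_mul, mul_neg, ← mul_assoc, hμι, hswap, mul_assoc]
  -- the main computation
  have hstep : (0 : ExteriorAlgebra ℝ (Module.Dual ℝ (V n)))
      = D • (θprod * omega n ^ (m' + 1))
        - ((m' : ℝ) + 1) •
            (ExteriorAlgebra.ι ℝ φ * ExteriorAlgebra.ι ℝ γ * θprod * omega n ^ m') := by
    calc (0 : ExteriorAlgebra ℝ (Module.Dual ℝ (V n)))
        = CliffordAlgebra.contractLeft d
            (ExteriorAlgebra.ι ℝ γ * (θprod * omega n ^ (m' + 1))) := by rw [hE0, map_zero]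
      _ = d γ • (θprod * omega n ^ (m' + 1))
          - ExteriorAlgebra.ι ℝ γ
              * CliffordAlgebra.contractLeft d (θprod * omega n ^ (m' + 1)) := by
          rw [CliffordAlgebra.contractLeft_ι_mul]
      _ = D • (θprod * omega n ^ (m' + 1))
          - ((m' : ℝ) + 1) •
              (ExteriorAlgebra.ι ℝ φ * ExteriorAlgebra.ι ℝ γ * θprod * omega n ^ m') := by
          rw [hdψ, hγX, hTω, mul_smul_comm, e1, mul_smul_comm]
          congr 2
          rw [mul_neg, ← mul_assoc, ι_swap γ φ, neg_mul, neg_neg, mul_assoc, mul_assoc,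
            ← mul_assoc (ExteriorAlgebra.ι ℝ γ), ← mul_assoc]
          simp only [mul_assoc]
  -- conclude
  have hmm : n - k - 1 = m' := by omega
  rw [hmm, hm', show ((m' + 1 : ℕ) : ℝ) = (m' : ℝ) + 1 by push_cast; ring]
  exact (sub_eq_zero.mp hstep.symm).symm
end
end

section
/- On a symplectic manifold (M,ω) of dimension 2n with Poisson bracket {·,·} and Hamiltonian vector fields X_f, the ternary Hamiltonian vector field X_{f₁,f₂,f₃} associated to the quaternary bracket {f₁,f₂,f₃,f₄}·Ω = df₁∧df₂∧df₃∧df₄∧ω^{n−2} (with Ω proportional to ω^n), defined by X_{f₁,f₂,f₃}(f₄) = {f₁,f₂,f₃,f₄}, satisfies (up to a fixed nonzero constant) X_{f₁,f₂,f₃} = {f₁,f₂} X_{f₃} + {f₂,f₃} X_{f₁} + {f₃,f₁} X_{f₂}. -/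
set_option synthInstance.maxHeartbeats 1000000
set_option maxHeartbeats 1000000

noncomputable section
open ExteriorAlgebra

/-!
STATEMENT 13: On a 2n-dimensional symplectic manifold (2n ≥ 4), the ternary
Hamiltonian vector field X_{f₁,f₂,f₃} of the quaternary bracket, defined by
  {f₁,f₂,f₃,f₄} Ω = df₁∧df₂∧df₃∧df₄∧ω^{n−2}  (Ω proportional to ω^n),
  X_{f₁,f₂,f₃}(f₄) = {f₁,f₂,f₃,f₄},
satisfies, up to a fixed nonzero constant,
  X_{f₁,f₂,f₃} = {f₁,f₂} X_{f₃} + {f₂,f₃} X_{f₁} + {f₃,f₁} X_{f₂}.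

As sanctioned by the context, this is formalized pointwise on the standard
symplectic vector space ℝ^{2n} = (Fin n → ℝ) × (Fin n → ℝ) (p-coordinates first),
with ω = Σⱼ dpⱼ ∧ dqⱼ: for the covectors φ₁, φ₂, φ₃ (= dfᵢ at the point) and an
arbitrary covector ψ (= df₄), the equality of top forms
  φ₁∧φ₂∧φ₃∧ψ∧ω^{n−2} = (c · ψ({φ₁,φ₂} X_{φ₃} + {φ₂,φ₃} X_{φ₁} + {φ₃,φ₁} X_{φ₂})) • ω^n
holds for a fixed nonzero constant c (absorbing the normalizations of Ω), where
X_φ = sharp φ is the Hamiltonian vector of φ (ι_{X_φ} ω = −φ) and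
{φ,ψ} = ψ(sharp φ) is the Poisson bracket.
-/

variable (n : ℕ)

-- ============ auxiliary development ============
abbrev W (n : ℕ) := Module.Dual ℝ (V n)
abbrev Ex (n : ℕ) := ExteriorAlgebra ℝ (W n)

/-- contraction by a vector -/
def ctr (v : V n) : Ex n →ₗ[ℝ] Ex n :=
  CliffordAlgebra.contractLeft (Module.Dual.eval ℝ (V n) v)

lemma ctr_ι_mul (v : V n) (a : W n) (x : Ex n) :
    ctr n v (ι ℝ a * x) = a v • x - ι ℝ a * ctr n v x :=
  CliffordAlgebra.contractLeft_ι_mul _ _ _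

lemma ctr_one (v : V n) : ctr n v (1 : Ex n) = 0 :=
  CliffordAlgebra.contractLeft_one _ _

lemma ι_anticomm (a b : W n) : ι ℝ a * ι ℝ b = -(ι ℝ b * ι ℝ a) :=
  eq_neg_of_add_eq_zero_left (ExteriorAlgebra.ι_add_mul_swap a b)

lemma ι_mul_pair_comm (a b c : W n) :
    ι ℝ c * (ι ℝ a * ι ℝ b) = (ι ℝ a * ι ℝ b) * ι ℝ c := by
  rw [← mul_assoc, ι_anticomm n c a, neg_mul, mul_assoc, ι_anticomm n c b, mul_neg,
    neg_neg, ← mul_assoc]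

lemma omega_mul_ι_comm (c : W n) : omega n * ι ℝ c = ι ℝ c * omega n := by
  rw [omega, Finset.sum_mul, Finset.mul_sum]
  exact Finset.sum_congr rfl fun j _ => (ι_mul_pair_comm n _ _ _).symm

lemma pair_sq_zero (a b : W n) : (ι ℝ a * ι ℝ b) * (ι ℝ a * ι ℝ b) = 0 := by
  rw [mul_assoc, ι_mul_pair_comm n a b b, mul_assoc, ExteriorAlgebra.ι_sq_zero,
    mul_zero, mul_zero]

lemma pair_comm (a b c d : W n) :
    Commute (ι ℝ a * ι ℝ b) (ι ℝ c * ι ℝ d) := by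
  show (ι ℝ a * ι ℝ b) * (ι ℝ c * ι ℝ d) = (ι ℝ c * ι ℝ d) * (ι ℝ a * ι ℝ b)
  calc (ι ℝ a * ι ℝ b) * (ι ℝ c * ι ℝ d)
      = ((ι ℝ a * ι ℝ b) * ι ℝ c) * ι ℝ d := (mul_assoc _ _ _).symm
    _ = (ι ℝ c * (ι ℝ a * ι ℝ b)) * ι ℝ d := by rw [← ι_mul_pair_comm]
    _ = ι ℝ c * ((ι ℝ a * ι ℝ b) * ι ℝ d) := mul_assoc _ _ _
    _ = ι ℝ c * (ι ℝ d * (ι ℝ a * ι ℝ b)) := by rw [← ι_mul_pair_comm]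
    _ = (ι ℝ c * ι ℝ d) * (ι ℝ a * ι ℝ b) := (mul_assoc _ _ _).symm

/-- binomial for a square-zero commuting element -/
lemma sq_zero_add_pow {A : Type*} [Ring A] (w s : A) (hw : w * w = 0)
    (hc : Commute w s) (k : ℕ) :
    (w + s) ^ (k + 1) = s ^ (k + 1) + (k + 1) • (w * s ^ k) := by
  induction k with
  | zero => simpa using add_comm w s
  | succ k ih =>
    have h1 : w * (w * s ^ k) = 0 := by rw [← mul_assoc, hw, zero_mul]
    have h2 : s * (w * s ^ k) = w * s ^ (k + 1) := by
      rw [← mul_assoc, ← hc.eq, mul_assoc, ← pow_succ']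
    calc (w + s) ^ (k + 1 + 1) = (w + s) * (w + s) ^ (k + 1) := by rw [pow_succ']
      _ = (w + s) * (s ^ (k + 1) + (k + 1) • (w * s ^ k)) := by rw [ih]
      _ = w * s ^ (k + 1) + s * s ^ (k + 1) +
          ((k + 1) • (w * (w * s ^ k)) + (k + 1) • (s * (w * s ^ k))) := by
          rw [add_mul, mul_add, mul_add, mul_smul_comm, mul_smul_comm]; abel
      _ = s ^ (k + 1 + 1) + (k + 1 + 1) • (w * s ^ (k + 1)) := by
          rw [h1, h2, smul_zero, zero_add, ← pow_succ',
            add_nsmul (w * s ^ (k + 1)) (k + 1) 1, one_nsmul]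
          abel

lemma sum_sq_zero_pow {A : Type*} [Ring A] {I : Type*} [DecidableEq I] (S : Finset I)
    (w : I → A) (hsq : ∀ i ∈ S, w i * w i = 0)
    (hc : ∀ i ∈ S, ∀ j ∈ S, Commute (w i) (w j)) :
    (∑ i ∈ S, w i) ^ (S.card + 1) = 0 := by
  induction S using Finset.induction_on with
  | empty => simp
  | @insert a S ha ih =>
    rw [Finset.sum_insert ha, Finset.card_insert_of_notMem ha]
    have hcs : Commute (w a) (∑ i ∈ S, w i) := by
      apply Commute.sum_right
      intro i hi
      exact hc a (Finset.mem_insert_self a S) i (Finset.mem_insert_of_mem hi)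
    have hz : (∑ i ∈ S, w i) ^ (S.card + 1) = 0 := by
      apply ih
      · intro i hi; exact hsq i (Finset.mem_insert_of_mem hi)
      · intro i hi j hj
        exact hc i (Finset.mem_insert_of_mem hi) j (Finset.mem_insert_of_mem hj)
    rw [sq_zero_add_pow (w a) _ (hsq a (Finset.mem_insert_self a S)) hcs, hz,
      pow_succ, hz, zero_mul, mul_zero, smul_zero, add_zero]

lemma pi_repr (x : Fin n → ℝ) : x = ∑ j, x j • (Pi.single j 1 : Fin n → ℝ) := by
  conv_lhs => rw [← Finset.univ_sum_single x]
  exact Finset.sum_congr rfl fun j _ => by rw [← Pi.single_smul, smul_eq_mul, mul_one]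

lemma prod_repr (x y : Fin n → ℝ) :
    ((x, y) : V n) = ∑ j, (x j • ((Pi.single j 1 : Fin n → ℝ), (0 : Fin n → ℝ))
      + y j • ((0 : Fin n → ℝ), (Pi.single j 1 : Fin n → ℝ))) := by
  rw [Finset.sum_add_distrib]
  refine Prod.ext ?_ ?_ <;>
    simp [Prod.fst_sum, Prod.snd_sum, ← pi_repr]

lemma eval_repr (φ : W n) (x y : Fin n → ℝ) :
    φ (x, y) = ∑ j, (φ (Pi.single j 1, 0) * x j + φ (0, Pi.single j 1) * y j) := by
  conv_lhs => rw [prod_repr n x y]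
  rw [map_sum]
  exact Finset.sum_congr rfl fun j _ => by
    rw [map_add, map_smul, map_smul, smul_eq_mul, smul_eq_mul]; ring

lemma covector_repr (φ : W n) :
    φ = ∑ j, (φ (Pi.single j 1, 0) • dp n j + φ (0, Pi.single j 1) • dq n j) := by
  apply LinearMap.ext
  rintro ⟨x, y⟩
  rw [eval_repr n φ x y]
  simp [dp, dq]

lemma ι_repr (φ : W n) :
    ι ℝ φ = ∑ j, (φ (Pi.single j 1, 0) • ι ℝ (dp n j)
      + φ (0, Pi.single j 1) • ι ℝ (dq n j)) := by
  conv_lhs => rw [covector_repr n φ]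
  rw [map_sum]
  exact Finset.sum_congr rfl fun j _ => by rw [map_add, map_smul, map_smul]

lemma pb_antisymm (φ ψ : W n) : pb n φ ψ = -pb n ψ φ := by
  rw [pb, pb, sharp, sharp, eval_repr, eval_repr, ← Finset.sum_neg_distrib]
  exact Finset.sum_congr rfl fun j _ => by ring

lemma omega_pow_eq (j : Fin n) {k : ℕ} (hk : n = k + 1) :
    omega n ^ n = (∑ i ∈ Finset.univ.erase j, ι ℝ (dp n i) * ι ℝ (dq n i)) ^ n
      + n • ((ι ℝ (dp n j) * ι ℝ (dq n j)) *
          (∑ i ∈ Finset.univ.erase j, ι ℝ (dp n i) * ι ℝ (dq n i)) ^ k) := by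
  subst hk
  conv_lhs => rw [omega, ← Finset.add_sum_erase _ _ (Finset.mem_univ j)]
  exact sq_zero_add_pow _ _ (pair_sq_zero _ _ _)
    (Commute.sum_right _ _ _ fun i _ => pair_comm _ _ _ _ _) k

lemma erase_pow_eq_zero (j : Fin n) {k : ℕ} (hk : n = k + 1) :
    (∑ i ∈ Finset.univ.erase j, ι ℝ (dp n i) * ι ℝ (dq n i)) ^ n = 0 := by
  subst hk
  have hcard : (Finset.univ.erase j : Finset (Fin (k + 1))).card = k := by
    simp [Finset.card_erase_of_mem]
  have h := sum_sq_zero_pow (Finset.univ.erase j)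
    (fun i => ι ℝ (dp (k + 1) i) * ι ℝ (dq (k + 1) i))
    (fun i _ => pair_sq_zero _ _ _) (fun i _ l _ => pair_comm _ _ _ _ _)
  rwa [hcard] at h

lemma ι_dp_mul_omega_pow (j : Fin n) {k : ℕ} (hk : n = k + 1) :
    ι ℝ (dp n j) * omega n ^ n = 0 := by
  rw [omega_pow_eq n j hk, erase_pow_eq_zero n j hk, zero_add, mul_smul_comm,
    ← mul_assoc, ← mul_assoc, ExteriorAlgebra.ι_sq_zero, zero_mul, zero_mul, smul_zero]

lemma ι_dq_mul_omega_pow (j : Fin n) {k : ℕ} (hk : n = k + 1) :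
    ι ℝ (dq n j) * omega n ^ n = 0 := by
  rw [omega_pow_eq n j hk, erase_pow_eq_zero n j hk, zero_add, mul_smul_comm,
    ← mul_assoc, ι_mul_pair_comm, mul_assoc, mul_assoc,
    ← mul_assoc (ι ℝ (dq n j)) (ι ℝ (dq n j)), ExteriorAlgebra.ι_sq_zero, zero_mul,
    mul_zero, smul_zero]

lemma ι_mul_omega_pow (φ : W n) {k : ℕ} (hk : n = k + 1) :
    ι ℝ φ * omega n ^ n = 0 := by
  rw [ι_repr n φ, Finset.sum_mul]
  refine Finset.sum_eq_zero fun j _ => ?_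
  rw [add_mul, smul_mul_assoc, smul_mul_assoc, ι_dp_mul_omega_pow n j hk,
    ι_dq_mul_omega_pow n j hk, smul_zero, smul_zero, add_zero]

lemma ctr_ι (v : V n) (a : W n) : ctr n v (ι ℝ a) = a v • 1 := by
  have h := ctr_ι_mul n v a 1
  rw [mul_one, ctr_one, mul_zero, sub_zero] at h
  exact h

lemma ctr_pair (v : V n) (a b : W n) :
    ctr n v (ι ℝ a * ι ℝ b) = a v • ι ℝ b - b v • ι ℝ a := by
  rw [ctr_ι_mul, ctr_ι, mul_smul_comm, mul_one]

lemma ctr_omega (v : V n) :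
    ctr n v (omega n) = ∑ j, (v.1 j • ι ℝ (dq n j) - v.2 j • ι ℝ (dp n j)) := by
  rw [omega, map_sum]
  exact Finset.sum_congr rfl fun j _ => by rw [ctr_pair]; rfl

lemma ctr_sharp_omega (φ : W n) : ctr n (sharp n φ) (omega n) = -ι ℝ φ := by
  rw [ctr_omega, ι_repr n φ, ← Finset.sum_neg_distrib]
  refine Finset.sum_congr rfl fun j _ => ?_
  show (-φ (0, Pi.single j 1)) • ι ℝ (dq n j) - φ (Pi.single j 1, 0) • ι ℝ (dp n j) = _
  rw [neg_smul, neg_add]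
  abel

lemma ctr_pair_mul (v : V n) (a b : W n) (x : Ex n) :
    ctr n v (ι ℝ a * (ι ℝ b * x))
      = a v • (ι ℝ b * x) - b v • (ι ℝ a * x) + (ι ℝ a * ι ℝ b) * ctr n v x := by
  rw [ctr_ι_mul, ctr_ι_mul, mul_sub, mul_smul_comm, ← mul_assoc]
  abel

lemma ctr_omega_mul (v : V n) (x : Ex n) :
    ctr n v (omega n * x) = ctr n v (omega n) * x + omega n * ctr n v x := by
  rw [ctr_omega, omega, Finset.sum_mul, Finset.sum_mul, Finset.sum_mul, map_sum,
    ← Finset.sum_add_distrib]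
  refine Finset.sum_congr rfl fun j _ => ?_
  rw [mul_assoc, ctr_pair_mul, sub_mul, smul_mul_assoc, smul_mul_assoc]
  rfl

lemma omega_comm_ctr_omega (v : V n) :
    omega n * ctr n v (omega n) = ctr n v (omega n) * omega n := by
  rw [ctr_omega, Finset.mul_sum, Finset.sum_mul]
  refine Finset.sum_congr rfl fun j _ => ?_
  rw [mul_sub, sub_mul, mul_smul_comm, mul_smul_comm, smul_mul_assoc, smul_mul_assoc,
    omega_mul_ι_comm, omega_mul_ι_comm]

lemma ctr_omega_pow (v : V n) (k : ℕ) :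
    ctr n v (omega n ^ (k + 1)) = (k + 1) • (ctr n v (omega n) * omega n ^ k) := by
  induction k with
  | zero => rw [pow_one, pow_zero, mul_one, one_nsmul]
  | succ k ih =>
    rw [pow_succ', ctr_omega_mul, ih, mul_smul_comm, ← mul_assoc,
      omega_comm_ctr_omega, mul_assoc, ← pow_succ',
      add_nsmul (ctr n v (omega n) * omega n ^ (k + 1)) (k + 1) 1, one_nsmul]
    abel

lemma binary (α β : W n) {k : ℕ} (hk : n = k + 1) :
    ι ℝ α * (ι ℝ β * omega n ^ k) = (pb n α β / n) • omega n ^ n := by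
  subst hk
  have h0 : ctr (k + 1) (sharp (k + 1) β) (ι ℝ α * omega (k + 1) ^ (k + 1)) = 0 := by
    rw [ι_mul_omega_pow (k + 1) α rfl, map_zero]
  rw [ctr_ι_mul, ctr_omega_pow, ctr_sharp_omega, neg_mul, smul_neg, mul_neg,
    sub_neg_eq_add, mul_smul_comm, ← Nat.cast_smul_eq_nsmul ℝ] at h0
  have hc : ((k + 1 : ℕ) : ℝ) ≠ 0 := Nat.cast_ne_zero.mpr (Nat.succ_ne_zero k)
  have h1 : ((k + 1 : ℕ) : ℝ) • (ι ℝ α * (ι ℝ β * omega (k + 1) ^ k))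
      = (-(α (sharp (k + 1) β))) • omega (k + 1) ^ (k + 1) := by
    rw [neg_smul]
    exact eq_neg_of_add_eq_zero_right h0
  calc ι ℝ α * (ι ℝ β * omega (k + 1) ^ k)
      = ((k + 1 : ℕ) : ℝ)⁻¹ • (((k + 1 : ℕ) : ℝ) • (ι ℝ α * (ι ℝ β * omega (k + 1) ^ k))) :=
        (inv_smul_smul₀ hc _).symm
    _ = ((k + 1 : ℕ) : ℝ)⁻¹ • ((-(α (sharp (k + 1) β))) • omega (k + 1) ^ (k + 1)) := by
        rw [h1]
    _ = (pb (k + 1) α β / ((k + 1 : ℕ) : ℝ)) • omega (k + 1) ^ (k + 1) := by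
        rw [smul_smul]
        congr 1
        have : α (sharp (k + 1) β) = pb (k + 1) β α := rfl
        rw [this, pb_antisymm (k + 1) β α]
        ring

theorem ternary_hamiltonian_field_of_quaternary_bracket (hn : 2 ≤ n) :
    ∃ c : ℝ, c ≠ 0 ∧
      ∀ φ₁ φ₂ φ₃ ψ : Module.Dual ℝ (V n),
        ExteriorAlgebra.ι ℝ φ₁ * ExteriorAlgebra.ι ℝ φ₂ * ExteriorAlgebra.ι ℝ φ₃ *
            ExteriorAlgebra.ι ℝ ψ * omega n ^ (n - 2) =
          (c * ψ (pb n φ₁ φ₂ • sharp n φ₃ + pb n φ₂ φ₃ • sharp n φ₁ +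
              pb n φ₃ φ₁ • sharp n φ₂)) • omega n ^ n := by
  obtain ⟨m, rfl⟩ : ∃ m, n = m + 2 := ⟨n - 2, by omega⟩
  have hM : ((m + 1 : ℕ) : ℝ) ≠ 0 := Nat.cast_ne_zero.mpr (by omega)
  have hM' : (-((m + 1 : ℕ) : ℝ)) ≠ 0 := neg_ne_zero.mpr hM
  refine ⟨(((m + 2 : ℕ) : ℝ) * ((m + 1 : ℕ) : ℝ))⁻¹, by positivity, ?_⟩
  intro φ₁ φ₂ φ₃ ψ
  simp only [Nat.add_sub_cancel]
  have hz : ι ℝ φ₁ * (ι ℝ φ₂ * (ι ℝ ψ * omega (m + 2) ^ (m + 1))) = 0 := by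
    rw [binary (m + 2) φ₂ ψ (k := m + 1) rfl, mul_smul_comm,
      ι_mul_omega_pow (m + 2) φ₁ (k := m + 1) rfl, smul_zero]
  have h3 : ctr (m + 2) (sharp (m + 2) φ₃)
      (ι ℝ φ₁ * (ι ℝ φ₂ * (ι ℝ ψ * omega (m + 2) ^ (m + 1)))) = 0 := by
    rw [hz, map_zero]
  rw [ctr_ι_mul, ctr_ι_mul, ctr_ι_mul, ctr_omega_pow, ctr_sharp_omega] at h3
  simp only [neg_mul, smul_neg, mul_neg, sub_neg_eq_add, mul_sub, mul_add,
    mul_smul_comm, smul_smul] at h3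
  rw [binary (m + 2) φ₂ ψ (k := m + 1) rfl, binary (m + 2) φ₁ ψ (k := m + 1) rfl,
    binary (m + 2) φ₁ φ₂ (k := m + 1) rfl, ← Nat.cast_smul_eq_nsmul ℝ] at h3
  simp only [pb] at h3
  rw [show φ₂ (sharp (m + 2) φ₃) = -(φ₃ (sharp (m + 2) φ₂)) from
    pb_antisymm (m + 2) φ₃ φ₂] at h3
  have hTQ : ι ℝ φ₁ * ι ℝ φ₂ * ι ℝ φ₃ * ι ℝ ψ * omega (m + 2) ^ m
      = -(ι ℝ φ₁ * (ι ℝ φ₂ * (ι ℝ ψ * (ι ℝ φ₃ * omega (m + 2) ^ m)))) := by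
    rw [mul_assoc (ι ℝ φ₁ * ι ℝ φ₂) (ι ℝ φ₃) (ι ℝ ψ), ι_anticomm (m + 2) φ₃ ψ]
    noncomm_ring
  rw [hTQ]
  have hS : (-((m + 1 : ℕ) : ℝ)) •
        (-(ι ℝ φ₁ * (ι ℝ φ₂ * (ι ℝ ψ * (ι ℝ φ₃ * omega (m + 2) ^ m)))))
      = (-((m + 1 : ℕ) : ℝ)) • (((((m + 2 : ℕ) : ℝ) * ((m + 1 : ℕ) : ℝ))⁻¹ *
          ψ (pb (m + 2) φ₁ φ₂ • sharp (m + 2) φ₃ + pb (m + 2) φ₂ φ₃ • sharp (m + 2) φ₁ +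
            pb (m + 2) φ₃ φ₁ • sharp (m + 2) φ₂)) • omega (m + 2) ^ (m + 2)) := by
    simp only [map_add, map_smul, smul_eq_mul, pb]
    rw [← sub_eq_zero, ← h3]
    have hm2 : (2 + (m : ℝ)) ≠ 0 := by positivity
    have hm1 : (1 + (m : ℝ)) ≠ 0 := by positivity
    have hm2' : ((m : ℝ) + 2) ≠ 0 := by positivity
    have hm1' : ((m : ℝ) + 1) ≠ 0 := by positivity
    match_scalars <;> push_cast <;> field_simp <;> ring
  calc -(ι ℝ φ₁ * (ι ℝ φ₂ * (ι ℝ ψ * (ι ℝ φ₃ * omega (m + 2) ^ m))))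
      = (-((m + 1 : ℕ) : ℝ))⁻¹ • ((-((m + 1 : ℕ) : ℝ)) •
          (-(ι ℝ φ₁ * (ι ℝ φ₂ * (ι ℝ ψ * (ι ℝ φ₃ * omega (m + 2) ^ m)))))) :=
        (inv_smul_smul₀ hM' _).symm
    _ = (-((m + 1 : ℕ) : ℝ))⁻¹ • ((-((m + 1 : ℕ) : ℝ)) •
          (((((m + 2 : ℕ) : ℝ) * ((m + 1 : ℕ) : ℝ))⁻¹ *
            ψ (pb (m + 2) φ₁ φ₂ • sharp (m + 2) φ₃ + pb (m + 2) φ₂ φ₃ • sharp (m + 2) φ₁ +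
              pb (m + 2) φ₃ φ₁ • sharp (m + 2) φ₂)) • omega (m + 2) ^ (m + 2))) := by
        rw [hS]
    _ = _ := inv_smul_smul₀ hM' _
end
end
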